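/- With notation as in the context, let S = {(y,x) ∈ ℂⁿ × ℂ^{n+1} : y₁ = ⋯ = y_ℓ = 0 and x_{n+1} = 0}, and for each c ∈ ℂ with c^ℓ = 1 let T_c = {(y,x) ∈ ℂⁿ × ℂ^{n+1} : y_j = c^{ℓ+1−j}·y₁ for all 2 ≤ j ≤ ℓ, x_{n+1} = 0, and L_c(x) = 0}. Then A = S ∪ ⋃_{c^ℓ=1} T_c, and S as well as each T_c is a ℂ-linear subspace of ℂ^{2n+1} of dimension 2n − ℓ. In particular, A is a finite union of linear subspaces each of dimension 2n − ℓ. -/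

import Mathlib

noncomputable section

/-- `P(y,x) = y₁x₁ + ⋯ + y_ℓx_ℓ + x_{n+1}²` (coordinates indexed from `0`). -/
def Ppoly (n ℓ : ℕ) (hn : ℓ ≤ n) (y : Fin n → ℂ) (x : Fin (n + 1) → ℂ) : ℂ :=
  (∑ k : Fin ℓ, y (Fin.castLE hn k) * x (Fin.castLE (hn.trans n.le_succ) k)) +
    x (Fin.last n) ^ 2

/-- `Q(y,x) = y₂x₁ + y₃x₂ + ⋯ + y_ℓx_{ℓ−1} + y₁x_ℓ` (for `ℓ = 1`, `Q = y₁x₁`), written as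
`∑_{k=1}^{ℓ} y_{σ(k)} x_k` with `σ` the cyclic shift of `{1,…,ℓ}`. -/
def Qpoly (n ℓ : ℕ) (h1 : 1 ≤ ℓ) (hn : ℓ ≤ n) (y : Fin n → ℂ) (x : Fin (n + 1) → ℂ) : ℂ :=
  ∑ k : Fin ℓ, y (Fin.castLE hn ⟨((k : ℕ) + 1) % ℓ, Nat.mod_lt _ h1⟩) *
    x (Fin.castLE (hn.trans n.le_succ) k)

/-- The `2 × ℓ` matrix `D_y` with rows `(y₁,…,y_ℓ)` and `(y₂,…,y_ℓ,y₁)`. -/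
def Dmat (n ℓ : ℕ) (h1 : 1 ≤ ℓ) (hn : ℓ ≤ n) (y : Fin n → ℂ) : Matrix (Fin 2) (Fin ℓ) ℂ :=
  Matrix.of ![fun k => y (Fin.castLE hn k),
    fun k => y (Fin.castLE hn ⟨((k : ℕ) + 1) % ℓ, Nat.mod_lt _ h1⟩)]

/-- `L_c(x) = ∑_{k=1}^{ℓ} c^{ℓ+1−k}·x_k` (in `0`-based indexing, `∑_k c^{ℓ−k} x_k`). -/
def Lpoly (n ℓ : ℕ) (hn : ℓ ≤ n) (c : ℂ) (x : Fin (n + 1) → ℂ) : ℂ :=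
  ∑ k : Fin ℓ, c ^ (ℓ - (k : ℕ)) * x (Fin.castLE (hn.trans n.le_succ) k)

/-- The space `X = {P = 0, Q = 0} ⊆ ℂⁿ × ℂ^{n+1}` of Example 2.3. -/
def Xset (n ℓ : ℕ) (h1 : 1 ≤ ℓ) (hn : ℓ ≤ n) : Set ((Fin n → ℂ) × (Fin (n + 1) → ℂ)) :=
  {p | Ppoly n ℓ hn p.1 p.2 = 0 ∧ Qpoly n ℓ h1 hn p.1 p.2 = 0}

/-- The locus `A = {(y,x) ∈ X : rank D_y ≤ 1}`. -/
def Aset (n ℓ : ℕ) (h1 : 1 ≤ ℓ) (hn : ℓ ≤ n) : Set ((Fin n → ℂ) × (Fin (n + 1) → ℂ)) :=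
  {p ∈ Xset n ℓ h1 hn | (Dmat n ℓ h1 hn p.1).rank ≤ 1}

/-- `S = {(y,x) : y₁ = ⋯ = y_ℓ = 0, x_{n+1} = 0}`. -/
def Sset (n ℓ : ℕ) (hn : ℓ ≤ n) : Set ((Fin n → ℂ) × (Fin (n + 1) → ℂ)) :=
  {p | (∀ k : Fin ℓ, p.1 (Fin.castLE hn k) = 0) ∧ p.2 (Fin.last n) = 0}

/-- `T_c = {(y,x) : y_j = c^{ℓ+1−j} y₁ (2 ≤ j ≤ ℓ), x_{n+1} = 0, L_c(x) = 0}`. -/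
def Tset (n ℓ : ℕ) (h1 : 1 ≤ ℓ) (hn : ℓ ≤ n) (c : ℂ) :
    Set ((Fin n → ℂ) × (Fin (n + 1) → ℂ)) :=
  {p | (∀ j : Fin ℓ, j ≠ ⟨0, h1⟩ →
      p.1 (Fin.castLE hn j) = c ^ (ℓ - (j : ℕ)) * p.1 (Fin.castLE hn ⟨0, h1⟩)) ∧
    p.2 (Fin.last n) = 0 ∧ Lpoly n ℓ hn c p.2 = 0}

/-! ### Auxiliary material -/

open Module Submodule LinearMap

namespace Ex23

/-- If the second row is a multiple of the first, the rank is at most one. -/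
lemma rank_le_one_row {m : ℕ} (M : Matrix (Fin 2) (Fin m) ℂ) (μ : ℂ)
    (h : M 1 = μ • M 0) : M.rank ≤ 1 := by
  have hr : M.rank = finrank ℂ (span ℂ (Set.range M)) := by
    rw [← M.rank_transpose, Matrix.rank_eq_finrank_span_cols]; rfl
  rw [hr]
  have hle : span ℂ (Set.range M) ≤ span ℂ {M 0} := by
    rw [span_le]
    rintro v ⟨i, rfl⟩
    fin_cases i
    · exact subset_span rfl
    · show M 1 ∈ _
      rw [h]; exact Submodule.smul_mem _ _ (subset_span rfl)
  refine le_trans (Submodule.finrank_mono hle) ?_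
  by_cases h0 : M 0 = 0
  · rw [h0, Submodule.span_zero_singleton]; simp
  · rw [finrank_span_singleton h0]

/-- If the rank is at most one and the first row is nonzero, the second row is a
multiple of the first. -/
lemma exists_smul_row {m : ℕ} (M : Matrix (Fin 2) (Fin m) ℂ)
    (h : M.rank ≤ 1) (h0 : M 0 ≠ 0) : ∃ μ : ℂ, M 1 = μ • M 0 := by
  have hr : M.rank = finrank ℂ (span ℂ (Set.range M)) := by
    rw [← M.rank_transpose, Matrix.rank_eq_finrank_span_cols]; rfl
  rw [hr] at h
  have hle : span ℂ {M 0} ≤ span ℂ (Set.range M) :=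
    span_mono (Set.singleton_subset_iff.2 ⟨0, rfl⟩)
  have he : span ℂ {M 0} = span ℂ (Set.range M) :=
    Submodule.eq_of_le_of_finrank_le hle (by rw [finrank_span_singleton h0]; exact h)
  have hm : M 1 ∈ span ℂ {M 0} := by
    rw [he]; exact subset_span ⟨1, rfl⟩
  obtain ⟨μ, hμ⟩ := Submodule.mem_span_singleton.1 hm
  exact ⟨μ, hμ.symm⟩

variable (n ℓ : ℕ) (h1 : 1 ≤ ℓ) (hn : ℓ ≤ n)

/-- Cyclic recurrence implies geometric form. -/
lemma cyc_pow (Y : Fin ℓ → ℂ) (μ : ℂ)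
    (hrec : ∀ k : Fin ℓ, Y ⟨((k : ℕ) + 1) % ℓ, Nat.mod_lt _ h1⟩ = μ * Y k) :
    ∀ j : Fin ℓ, Y j = μ ^ (j : ℕ) * Y ⟨0, h1⟩ := by
  rintro ⟨m, hm⟩
  induction m with
  | zero => simp
  | succ m ih =>
    have hm' : m < ℓ := Nat.lt_of_succ_lt hm
    have e : (⟨m + 1, hm⟩ : Fin ℓ) =
        ⟨(((⟨m, hm'⟩ : Fin ℓ) : ℕ) + 1) % ℓ, Nat.mod_lt _ h1⟩ :=
      Fin.ext (by simp [Nat.mod_eq_of_lt hm])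
    conv_lhs => rw [e, hrec ⟨m, hm'⟩]
    rw [ih hm']
    show μ * (μ ^ m * Y ⟨0, h1⟩) = μ ^ (m + 1) * Y ⟨0, h1⟩
    rw [pow_succ]
    ring

lemma mu_pow_eq_one (Y : Fin ℓ → ℂ) (μ : ℂ)
    (hrec : ∀ k : Fin ℓ, Y ⟨((k : ℕ) + 1) % ℓ, Nat.mod_lt _ h1⟩ = μ * Y k)
    (i : Fin ℓ) (hi : Y i ≠ 0) : μ ^ ℓ = 1 := by
  have hall := cyc_pow ℓ h1 Y μ hrec
  have hY0 : Y ⟨0, h1⟩ ≠ 0 := by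
    intro h0; exact hi (by rw [hall i, h0, mul_zero])
  have hlt : ℓ - 1 < ℓ := by omega
  have hk := hrec ⟨ℓ - 1, hlt⟩
  have hk' : Y ⟨0, h1⟩ = μ * Y ⟨ℓ - 1, hlt⟩ := by
    rw [← hk]
    congr 1
    apply Fin.ext
    show (0 : ℕ) = (ℓ - 1 + 1) % ℓ
    rw [show ℓ - 1 + 1 = ℓ by omega, Nat.mod_self]
  have hall' : Y ⟨ℓ - 1, hlt⟩ = μ ^ (ℓ - 1) * Y ⟨0, h1⟩ := hall ⟨ℓ - 1, hlt⟩
  have hp : μ ^ ℓ = μ ^ (ℓ - 1) * μ := by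
    rw [← pow_succ]; congr 1; omega
  have h2 : μ ^ ℓ * Y ⟨0, h1⟩ = 1 * Y ⟨0, h1⟩ := by
    rw [one_mul, hp]
    conv_rhs => rw [hk', hall']
    ring
  exact mul_right_cancel₀ hY0 h2

lemma pow_sub_mod (c : ℂ) (hc : c ^ ℓ = 1) (k : Fin ℓ) :
    c ^ (ℓ - (((k : ℕ) + 1) % ℓ)) = c ^ (ℓ - 1) * c ^ (ℓ - (k : ℕ)) := by
  rw [← pow_add]
  rcases eq_or_lt_of_le (Nat.succ_le_of_lt k.isLt) with he | hlt
  · have he' : (k : ℕ) + 1 = ℓ := he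
    rw [show ((k : ℕ) + 1) % ℓ = 0 by rw [he']; exact Nat.mod_self ℓ, Nat.sub_zero]
    congr 1
    omega
  · rw [Nat.mod_eq_of_lt hlt,
      show (ℓ - 1) + (ℓ - (k : ℕ)) = (ℓ - ((k : ℕ) + 1)) + ℓ by omega, pow_add, hc, mul_one]

lemma pow_key (μ : ℂ) (hμℓ : μ ^ ℓ = 1) (j : ℕ) (hj : j < ℓ) :
    (μ ^ (ℓ - 1)) ^ (ℓ - j) = μ ^ j := by
  have hμ0 : μ ≠ 0 := by
    intro h
    rw [h, zero_pow (by omega : ℓ ≠ 0)] at hμℓ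
    exact zero_ne_one hμℓ
  have hA : (μ ^ (ℓ - 1)) ^ (ℓ - j) * μ ^ (ℓ - j) = 1 := by
    rw [← mul_pow, show μ ^ (ℓ - 1) * μ = μ ^ ℓ by
      rw [← pow_succ]; congr 1; omega, hμℓ, one_pow]
  have hB : μ ^ j * μ ^ (ℓ - j) = 1 := by
    rw [← pow_add, show j + (ℓ - j) = ℓ by omega, hμℓ]
  exact mul_right_cancel₀ (pow_ne_zero _ hμ0) (hA.trans hB.symm)

lemma Ppoly_eq (y : Fin n → ℂ) (x : Fin (n + 1) → ℂ) (c : ℂ)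
    (hy : ∀ j : Fin ℓ, y (Fin.castLE hn j) =
      c ^ (ℓ - (j : ℕ)) * y (Fin.castLE hn ⟨0, h1⟩)) :
    Ppoly n ℓ hn y x =
      y (Fin.castLE hn ⟨0, h1⟩) * Lpoly n ℓ hn c x + x (Fin.last n) ^ 2 := by
  unfold Ppoly Lpoly
  rw [Finset.mul_sum]
  congr 1
  refine Finset.sum_congr rfl fun k _ => ?_
  rw [hy k]; ring

lemma Qpoly_eq (y : Fin n → ℂ) (x : Fin (n + 1) → ℂ) (c : ℂ) (hc : c ^ ℓ = 1)
    (hy : ∀ j : Fin ℓ, y (Fin.castLE hn j) =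
      c ^ (ℓ - (j : ℕ)) * y (Fin.castLE hn ⟨0, h1⟩)) :
    Qpoly n ℓ h1 hn y x =
      c ^ (ℓ - 1) * (y (Fin.castLE hn ⟨0, h1⟩) * Lpoly n ℓ hn c x) := by
  unfold Qpoly Lpoly
  rw [Finset.mul_sum, Finset.mul_sum]
  refine Finset.sum_congr rfl fun k _ => ?_
  rw [hy ⟨((k : ℕ) + 1) % ℓ, Nat.mod_lt _ h1⟩]
  show c ^ (ℓ - (((k : ℕ) + 1) % ℓ)) * _ * _ = _
  rw [pow_sub_mod ℓ c hc k]
  ring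

/-- The set equality part. -/
lemma main_eq : Aset n ℓ h1 hn =
    Sset n ℓ hn ∪ ⋃ c ∈ {c : ℂ | c ^ ℓ = 1}, Tset n ℓ h1 hn c := by
  ext p
  obtain ⟨y, x⟩ := p
  simp only [Aset, Xset, Sset, Tset, Set.mem_setOf_eq, Set.mem_union, Set.mem_iUnion,
    exists_prop]
  have hrow0 : Dmat n ℓ h1 hn y 0 = fun k => y (Fin.castLE hn k) := rfl
  have hrow1 : Dmat n ℓ h1 hn y 1 =
      fun k : Fin ℓ => y (Fin.castLE hn ⟨((k : ℕ) + 1) % ℓ, Nat.mod_lt _ h1⟩) := rfl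
  constructor
  · rintro ⟨⟨hP, hQ⟩, hrank⟩
    by_cases hz : ∀ k : Fin ℓ, y (Fin.castLE hn k) = 0
    · left
      refine ⟨hz, ?_⟩
      have h2 : x (Fin.last n) ^ 2 = 0 := by
        have hP' := hP; unfold Ppoly at hP'; simpa [hz] using hP'
      exact (pow_eq_zero_iff (two_ne_zero)).mp h2
    · right
      push_neg at hz; obtain ⟨i, hi⟩ := hz
      have hD0ne : Dmat n ℓ h1 hn y 0 ≠ 0 := by
        intro h
        rw [hrow0] at h
        exact hi (by simpa using congrFun h i)
      obtain ⟨μ, hμ⟩ := exists_smul_row _ hrank hD0ne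
      rw [hrow0, hrow1] at hμ
      have hrec : ∀ k : Fin ℓ,
          y (Fin.castLE hn ⟨((k : ℕ) + 1) % ℓ, Nat.mod_lt _ h1⟩) =
            μ * y (Fin.castLE hn k) := by
        intro k
        simpa using congrFun hμ k
      have hall : ∀ j : Fin ℓ, y (Fin.castLE hn j) =
          μ ^ (j : ℕ) * y (Fin.castLE hn ⟨0, h1⟩) :=
        cyc_pow ℓ h1 (fun k => y (Fin.castLE hn k)) μ hrec
      have hμℓ : μ ^ ℓ = 1 := mu_pow_eq_one ℓ h1 (fun k => y (Fin.castLE hn k)) μ hrec i hi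
      set c : ℂ := μ ^ (ℓ - 1) with hcdef
      have hc : c ^ ℓ = 1 := by
        rw [hcdef, ← pow_mul, mul_comm, pow_mul, hμℓ, one_pow]
      have hy : ∀ j : Fin ℓ, y (Fin.castLE hn j) =
          c ^ (ℓ - (j : ℕ)) * y (Fin.castLE hn ⟨0, h1⟩) := by
        intro j
        rw [hall j, hcdef, pow_key ℓ μ hμℓ (j : ℕ) j.isLt]

      have hY0 : y (Fin.castLE hn ⟨0, h1⟩) ≠ 0 := by
        intro h0; exact hi (by rw [hall i, h0, mul_zero])
      have hc0 : c ≠ 0 := by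
        intro h0; rw [h0, zero_pow (by omega : ℓ ≠ 0)] at hc; exact zero_ne_one hc
      have hL : Lpoly n ℓ hn c x = 0 := by
        have hQ' : c ^ (ℓ - 1) * (y (Fin.castLE hn ⟨0, h1⟩) * Lpoly n ℓ hn c x) = 0 := by
          rw [← Qpoly_eq n ℓ h1 hn y x c hc hy]; exact hQ
        have h2 : y (Fin.castLE hn ⟨0, h1⟩) * Lpoly n ℓ hn c x = 0 :=
          mul_left_cancel₀ (pow_ne_zero _ hc0) (hQ'.trans (mul_zero _).symm)
        exact mul_left_cancel₀ hY0 (h2.trans (mul_zero _).symm)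
      have hx : x (Fin.last n) = 0 := by
        rw [Ppoly_eq n ℓ h1 hn y x c hy, hL, mul_zero, zero_add] at hP
        exact (pow_eq_zero_iff (two_ne_zero)).mp hP
      exact ⟨c, hc, fun j _ => hy j, hx, hL⟩
  · rintro (⟨hz, hxl⟩ | ⟨c, hc, hy', hxl, hL⟩)
    · refine ⟨⟨?_, ?_⟩, ?_⟩
      · unfold Ppoly
        rw [Finset.sum_eq_zero fun k _ => by rw [hz, zero_mul], hxl]
        ring
      · unfold Qpoly
        exact Finset.sum_eq_zero fun k _ => by rw [hz, zero_mul]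
      · refine rank_le_one_row _ (0 : ℂ) ?_
        rw [hrow0, hrow1]
        funext k
        show y (Fin.castLE hn ⟨((k : ℕ) + 1) % ℓ, Nat.mod_lt _ h1⟩) = _
        rw [hz ⟨((k : ℕ) + 1) % ℓ, Nat.mod_lt _ h1⟩]
        simp
    · have hy : ∀ j : Fin ℓ, y (Fin.castLE hn j) =
          c ^ (ℓ - (j : ℕ)) * y (Fin.castLE hn ⟨0, h1⟩) := by
        intro j
        by_cases hj : j = ⟨0, h1⟩
        · rw [hj]
          show _ = c ^ (ℓ - 0) * _
          rw [Nat.sub_zero, hc, one_mul]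
        · exact hy' j hj
      refine ⟨⟨?_, ?_⟩, ?_⟩
      · rw [Ppoly_eq n ℓ h1 hn y x c hy, hL, hxl]; ring
      · rw [Qpoly_eq n ℓ h1 hn y x c hc hy, hL]; ring
      · refine rank_le_one_row _ (c ^ (ℓ - 1)) ?_
        rw [hrow0, hrow1]
        funext k
        show y (Fin.castLE hn ⟨((k : ℕ) + 1) % ℓ, Nat.mod_lt _ h1⟩) =
          c ^ (ℓ - 1) * y (Fin.castLE hn k)
        rw [hy ⟨((k : ℕ) + 1) % ℓ, Nat.mod_lt _ h1⟩, hy k, pow_sub_mod ℓ c hc k]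
        ring

/-- The linear map whose kernel is `S`. -/
def phiS : ((Fin n → ℂ) × (Fin (n + 1) → ℂ)) →ₗ[ℂ] (Fin ℓ → ℂ) × ℂ where
  toFun p := (fun k => p.1 (Fin.castLE hn k), p.2 (Fin.last n))
  map_add' p q := rfl
  map_smul' a p := rfl

lemma Lpoly_add (c : ℂ) (x x' : Fin (n + 1) → ℂ) :
    Lpoly n ℓ hn c (x + x') = Lpoly n ℓ hn c x + Lpoly n ℓ hn c x' := by
  simp [Lpoly, mul_add, Finset.sum_add_distrib]

lemma Lpoly_smul (c a : ℂ) (x : Fin (n + 1) → ℂ) :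
    Lpoly n ℓ hn c (a • x) = a * Lpoly n ℓ hn c x := by
  simp [Lpoly, Finset.mul_sum, mul_left_comm]

/-- The linear map whose kernel is `T_c`. -/
def psiT (c : ℂ) : ((Fin n → ℂ) × (Fin (n + 1) → ℂ)) →ₗ[ℂ] (Fin ℓ → ℂ) × ℂ where
  toFun p := (fun j => if j = ⟨0, h1⟩ then Lpoly n ℓ hn c p.2
      else p.1 (Fin.castLE hn j) - c ^ (ℓ - (j : ℕ)) * p.1 (Fin.castLE hn ⟨0, h1⟩),
    p.2 (Fin.last n))
  map_add' p q := by
    refine Prod.ext (funext fun j => ?_) rfl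
    by_cases hj : j = ⟨0, h1⟩ <;>
      simp [hj, Lpoly_add n ℓ hn c p.2 q.2] <;> ring
  map_smul' a p := by
    refine Prod.ext (funext fun j => ?_) rfl
    by_cases hj : j = ⟨0, h1⟩ <;>
      simp [hj, Lpoly_smul n ℓ hn c a p.2] <;> ring

lemma ker_phiS : ((LinearMap.ker (phiS n ℓ hn)) : Set _) = Sset n ℓ hn := by
  ext p
  simp only [SetLike.mem_coe, LinearMap.mem_ker, Sset, Set.mem_setOf_eq]
  constructor
  · intro h
    exact ⟨fun k => congrFun (congrArg Prod.fst h) k, congrArg Prod.snd h⟩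
  · rintro ⟨ha, hb⟩
    exact Prod.ext (funext fun k => ha k) hb

lemma ker_psiT (c : ℂ) :
    ((LinearMap.ker (psiT n ℓ h1 hn c)) : Set _) = Tset n ℓ h1 hn c := by
  ext p
  simp only [SetLike.mem_coe, LinearMap.mem_ker, Tset, Set.mem_setOf_eq]
  constructor
  · intro h
    have hfst : ∀ j : Fin ℓ, (if j = ⟨0, h1⟩ then Lpoly n ℓ hn c p.2
        else p.1 (Fin.castLE hn j) - c ^ (ℓ - (j : ℕ)) * p.1 (Fin.castLE hn ⟨0, h1⟩)) = 0 :=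
      fun j => congrFun (congrArg Prod.fst h) j
    refine ⟨fun j hj => ?_, congrArg Prod.snd h, ?_⟩
    · have h' := hfst j
      rw [if_neg hj] at h'
      exact sub_eq_zero.mp h'
    · have h' := hfst ⟨0, h1⟩
      rwa [if_pos rfl] at h'
  · rintro ⟨ha, hb, hL⟩
    refine Prod.ext (funext fun j => ?_) hb
    show (if j = ⟨0, h1⟩ then Lpoly n ℓ hn c p.2
        else p.1 (Fin.castLE hn j) - c ^ (ℓ - (j : ℕ)) * p.1 (Fin.castLE hn ⟨0, h1⟩)) = 0
    by_cases hj : j = ⟨0, h1⟩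
    · rw [if_pos hj]; exact hL
    · rw [if_neg hj]
      exact sub_eq_zero.mpr (ha j hj)

lemma surj_phiS : Function.Surjective (phiS n ℓ hn) := by
  rintro ⟨v, t⟩
  refine ⟨⟨fun i => if h : (i : ℕ) < ℓ then v ⟨i, h⟩ else 0,
    fun i => if i = Fin.last n then t else 0⟩, ?_⟩
  refine Prod.ext (funext fun k => ?_) ?_
  · show (if h : ((Fin.castLE hn k : Fin n) : ℕ) < ℓ then v ⟨_, h⟩ else 0) = v k
    rw [dif_pos (show ((Fin.castLE hn k : Fin n) : ℕ) < ℓ from k.isLt)]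
    exact congrArg v (Fin.ext rfl)
  · show (if Fin.last n = Fin.last n then t else 0) = t
    rw [if_pos rfl]

lemma surj_psiT (c : ℂ) (hc : c ^ ℓ = 1) : Function.Surjective (psiT n ℓ h1 hn c) := by
  rintro ⟨v, t⟩
  classical
  set x : Fin (n + 1) → ℂ :=
    fun i => if (i : ℕ) = 0 then v ⟨0, h1⟩ else if i = Fin.last n then t else 0 with hxdef
  have hx0 : ∀ k : Fin ℓ, x (Fin.castLE (hn.trans n.le_succ) k) =
      if (k : ℕ) = 0 then v ⟨0, h1⟩ else 0 := by
    intro k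
    have hlast : ¬ Fin.castLE (hn.trans n.le_succ) k = Fin.last n := by
      intro he
      have h' := congrArg Fin.val he
      simp only [Fin.coe_castLE, Fin.val_last] at h'
      have := k.isLt
      omega
    show (if ((Fin.castLE (hn.trans n.le_succ) k : Fin (n + 1)) : ℕ) = 0 then v ⟨0, h1⟩
        else if Fin.castLE (hn.trans n.le_succ) k = Fin.last n then t else 0) = _
    simp only [Fin.coe_castLE]
    by_cases hk : (k : ℕ) = 0
    · rw [if_pos hk, if_pos hk]
    · rw [if_neg hk, if_neg hlast, if_neg hk]
  have hL : Lpoly n ℓ hn c x = v ⟨0, h1⟩ := by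
    unfold Lpoly
    rw [Fintype.sum_eq_single (⟨0, h1⟩ : Fin ℓ)]
    · rw [hx0 ⟨0, h1⟩, if_pos rfl]
      show c ^ (ℓ - 0) * _ = _
      rw [Nat.sub_zero, hc, one_mul]
    · intro k hk
      rw [hx0 k, if_neg (fun h => hk (Fin.ext h)), mul_zero]
  refine ⟨⟨fun i => if h : (i : ℕ) < ℓ ∧ (i : ℕ) ≠ 0 then v ⟨i, h.1⟩ else 0, x⟩, ?_⟩
  refine Prod.ext (funext fun j => ?_) ?_
  · show (if j = ⟨0, h1⟩ then Lpoly n ℓ hn c x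
      else (if h : ((Fin.castLE hn j : Fin n) : ℕ) < ℓ ∧ ((Fin.castLE hn j : Fin n) : ℕ) ≠ 0
        then v ⟨_, h.1⟩ else 0) -
        c ^ (ℓ - (j : ℕ)) *
          (if h : ((Fin.castLE hn ⟨0, h1⟩ : Fin n) : ℕ) < ℓ ∧
              ((Fin.castLE hn ⟨0, h1⟩ : Fin n) : ℕ) ≠ 0 then v ⟨_, h.1⟩ else 0)) = v j
    by_cases hj : j = ⟨0, h1⟩
    · rw [if_pos hj, hL, hj]
    · have hj' : (j : ℕ) ≠ 0 := fun h => hj (Fin.ext h)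
      rw [if_neg hj, dif_pos (⟨j.isLt, hj'⟩ :
          ((Fin.castLE hn j : Fin n) : ℕ) < ℓ ∧ ((Fin.castLE hn j : Fin n) : ℕ) ≠ 0),
        dif_neg (show ¬(((Fin.castLE hn (⟨0, h1⟩ : Fin ℓ) : Fin n) : ℕ) < ℓ ∧
          ((Fin.castLE hn (⟨0, h1⟩ : Fin ℓ) : Fin n) : ℕ) ≠ 0) from fun h => h.2 rfl),
        mul_zero, sub_zero]
      exact congrArg v (Fin.ext rfl)
  · show x (Fin.last n) = t
    rw [hxdef]
    show (if ((Fin.last n : Fin (n + 1)) : ℕ) = 0 then _ else if (Fin.last n : Fin (n+1)) = Fin.last n then t else 0) = t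
    rw [if_neg (by simp only [Fin.val_last]; omega), if_pos rfl]

lemma finrank_ker_eq (f : ((Fin n → ℂ) × (Fin (n + 1) → ℂ)) →ₗ[ℂ] (Fin ℓ → ℂ) × ℂ)
    (hf : Function.Surjective f) : finrank ℂ (LinearMap.ker f) = 2 * n - ℓ := by
  have h := f.finrank_range_add_finrank_ker
  rw [LinearMap.range_eq_top.mpr hf, finrank_top] at h
  have h2 : finrank ℂ ((Fin n → ℂ) × (Fin (n + 1) → ℂ)) = n + (n + 1) := by simp
  have h3 : finrank ℂ ((Fin ℓ → ℂ) × ℂ) = ℓ + 1 := by simp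
  rw [h2, h3] at h
  omega

end Ex23

theorem Aset_union_of_linear_subspaces (n ℓ : ℕ) (h1 : 1 ≤ ℓ) (hn : ℓ ≤ n) :
    (Aset n ℓ h1 hn =
      Sset n ℓ hn ∪ ⋃ c ∈ {c : ℂ | c ^ ℓ = 1}, Tset n ℓ h1 hn c) ∧
    (∃ S' : Submodule ℂ ((Fin n → ℂ) × (Fin (n + 1) → ℂ)),
      (S' : Set ((Fin n → ℂ) × (Fin (n + 1) → ℂ))) = Sset n ℓ hn ∧
      Module.finrank ℂ S' = 2 * n - ℓ) ∧
    (∀ c : ℂ, c ^ ℓ = 1 →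
      ∃ T' : Submodule ℂ ((Fin n → ℂ) × (Fin (n + 1) → ℂ)),
        (T' : Set ((Fin n → ℂ) × (Fin (n + 1) → ℂ))) = Tset n ℓ h1 hn c ∧
        Module.finrank ℂ T' = 2 * n - ℓ) ∧
    (∃ 𝒲 : Finset (Submodule ℂ ((Fin n → ℂ) × (Fin (n + 1) → ℂ))),
      (Aset n ℓ h1 hn = ⋃ W ∈ 𝒲, (W : Set ((Fin n → ℂ) × (Fin (n + 1) → ℂ)))) ∧
      ∀ W ∈ 𝒲, Module.finrank ℂ W = 2 * n - ℓ) := by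
  classical
  refine ⟨Ex23.main_eq n ℓ h1 hn,
    ⟨LinearMap.ker (Ex23.phiS n ℓ hn), Ex23.ker_phiS n ℓ hn,
      Ex23.finrank_ker_eq n ℓ _ (Ex23.surj_phiS n ℓ hn)⟩,
    fun c hc => ⟨LinearMap.ker (Ex23.psiT n ℓ h1 hn c), Ex23.ker_psiT n ℓ h1 hn c,
      Ex23.finrank_ker_eq n ℓ _ (Ex23.surj_psiT n ℓ h1 hn c hc)⟩, ?_⟩
  refine ⟨insert (LinearMap.ker (Ex23.phiS n ℓ hn))
    (((Polynomial.nthRoots ℓ (1 : ℂ)).toFinset).image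
      fun c => LinearMap.ker (Ex23.psiT n ℓ h1 hn c)), ?_, ?_⟩
  · rw [Ex23.main_eq n ℓ h1 hn]
    ext p
    simp only [Set.mem_union, Set.mem_iUnion, Finset.mem_insert, Finset.mem_image,
      Multiset.mem_toFinset, Polynomial.mem_nthRoots (show 0 < ℓ by omega),
      Set.mem_setOf_eq, exists_prop]
    constructor
    · rintro (hS | ⟨c, hc, hT⟩)
      · exact ⟨_, Or.inl rfl, by rw [Ex23.ker_phiS n ℓ hn]; exact hS⟩
      · exact ⟨_, Or.inr ⟨c, hc, rfl⟩, by rw [Ex23.ker_psiT n ℓ h1 hn c]; exact hT⟩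
    · rintro ⟨W, (rfl | ⟨c, hc, rfl⟩), hp⟩
      · left; rwa [Ex23.ker_phiS n ℓ hn] at hp
      · right; exact ⟨c, hc, by rwa [Ex23.ker_psiT n ℓ h1 hn c] at hp⟩
  · intro W hW
    rcases Finset.mem_insert.mp hW with rfl | hW'
    · exact Ex23.finrank_ker_eq n ℓ _ (Ex23.surj_phiS n ℓ hn)
    · obtain ⟨c, hc, rfl⟩ := Finset.mem_image.mp hW'
      have hc' : c ^ ℓ = 1 :=
        (Polynomial.mem_nthRoots (show 0 < ℓ by omega)).mp (Multiset.mem_toFinset.mp hc)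
      exact Ex23.finrank_ker_eq n ℓ _ (Ex23.surj_psiT n ℓ h1 hn c hc')
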